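/- If a representation z_t preserves autoinformation at lag τ (AIG(z_t; τ) = 0), then z_t is sufficient for every noisy function y_{t+τ} = f(x_{t+τ}, ε) of the future state: I(x_t; y_{t+τ}) = I(z_t; y_{t+τ}). -/

import Mathlib

open Finset

/-- Probability mass function of a random variable `X : Ω → α` under the weight `μ`. -/
def pmfOf {Ω α : Type} [Fintype Ω] [DecidableEq α] (μ : Ω → ℝ) (X : Ω → α) (a : α) : ℝ :=
  ∑ ω ∈ Finset.univ.filter (fun ω => X ω = a), μ ω

/-- `μ` is a probability mass function on the finite sample space `Ω`. -/
def IsPMF {Ω : Type} [Fintype Ω] (μ : Ω → ℝ) : Prop :=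
  (∀ ω, 0 ≤ μ ω) ∧ ∑ ω, μ ω = 1

/-- Mutual information `I(X; Y)` of two finite-valued random variables. -/
noncomputable def mi {Ω α β : Type} [Fintype Ω] [Fintype α] [DecidableEq α]
    [Fintype β] [DecidableEq β] (μ : Ω → ℝ) (X : Ω → α) (Y : Ω → β) : ℝ :=
  ∑ a : α, ∑ b : β,
    pmfOf μ (fun ω => (X ω, Y ω)) (a, b) *
      Real.log (pmfOf μ (fun ω => (X ω, Y ω)) (a, b) / (pmfOf μ X a * pmfOf μ Y b))

/-- Conditional mutual information `I(X; Y | Z)` of finite-valued random variables. -/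
noncomputable def cmi {Ω α β γ : Type} [Fintype Ω] [Fintype α] [DecidableEq α]
    [Fintype β] [DecidableEq β] [Fintype γ] [DecidableEq γ]
    (μ : Ω → ℝ) (X : Ω → α) (Y : Ω → β) (Z : Ω → γ) : ℝ :=
  ∑ a : α, ∑ b : β, ∑ c : γ,
    pmfOf μ (fun ω => (X ω, Y ω, Z ω)) (a, b, c) *
      Real.log (pmfOf μ (fun ω => (X ω, Y ω, Z ω)) (a, b, c) * pmfOf μ Z c /
        (pmfOf μ (fun ω => (X ω, Z ω)) (a, c) * pmfOf μ (fun ω => (Y ω, Z ω)) (b, c)))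

/-- Conditional pmf `P(X = a | Y = b)`. -/
noncomputable def condPMF {Ω α β : Type} [Fintype Ω] [DecidableEq α] [DecidableEq β]
    (μ : Ω → ℝ) (X : Ω → α) (Y : Ω → β) (a : α) (b : β) : ℝ :=
  pmfOf μ (fun ω => (X ω, Y ω)) (a, b) / pmfOf μ Y b

/-- Independence of two finite-valued random variables. -/
def IndepRV {Ω α β : Type} [Fintype Ω] [Fintype α] [DecidableEq α]
    [Fintype β] [DecidableEq β] (μ : Ω → ℝ) (X : Ω → α) (Y : Ω → β) : Prop :=
  ∀ a b, pmfOf μ (fun ω => (X ω, Y ω)) (a, b) = pmfOf μ X a * pmfOf μ Y b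

section Base
variable {Ω α β γ : Type} [Fintype Ω] [DecidableEq α] [DecidableEq β] [DecidableEq γ]
variable (μ : Ω → ℝ)

lemma pmfOf_eq_sum_ite (X : Ω → α) (a : α) :
    pmfOf μ X a = ∑ ω, if X ω = a then μ ω else 0 := by
  simp [pmfOf, Finset.sum_filter]

lemma pmfOf_nonneg (hμ : ∀ ω, 0 ≤ μ ω) (X : Ω → α) (a : α) : 0 ≤ pmfOf μ X a :=
  Finset.sum_nonneg fun ω _ => hμ ω

lemma pmfOf_congr {X : Ω → α} {Y : Ω → β} {a : α} {b : β}
    (h : ∀ ω, X ω = a ↔ Y ω = b) : pmfOf μ X a = pmfOf μ Y b := by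
  unfold pmfOf
  exact Finset.sum_congr (by ext ω; simp [h ω]) fun _ _ => rfl

lemma pmfOf_mono (hμ : ∀ ω, 0 ≤ μ ω) {X : Ω → α} {Y : Ω → β} {a : α} {b : β}
    (h : ∀ ω, X ω = a → Y ω = b) : pmfOf μ X a ≤ pmfOf μ Y b := by
  apply Finset.sum_le_sum_of_subset_of_nonneg
  · intro ω hω
    simp only [Finset.mem_filter, Finset.mem_univ, true_and] at *
    exact h ω hω
  · exact fun ω _ _ => hμ ω

lemma sum_pmfOf [Fintype α] (hμ : IsPMF μ) (X : Ω → α) : ∑ a, pmfOf μ X a = 1 := by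
  simp only [pmfOf_eq_sum_ite]
  rw [Finset.sum_comm]
  calc ∑ ω, ∑ a, (if X ω = a then μ ω else 0) = ∑ ω, μ ω := by
        refine Finset.sum_congr rfl fun ω _ => ?_
        simp
    _ = 1 := hμ.2

lemma pmfOf_fiber_sum [Fintype β] (X : Ω → α) (Y : Ω → β) (a : α) :
    pmfOf μ X a = ∑ b, pmfOf μ (fun ω => (X ω, Y ω)) (a, b) := by
  simp only [pmfOf_eq_sum_ite]
  rw [Finset.sum_comm]
  refine Finset.sum_congr rfl fun ω _ => ?_
  by_cases h : X ω = a <;> simp [h, Prod.ext_iff]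

/-- transfer a pmf through an intermediate variable -/
lemma pmfOf_comp [Fintype γ] (T : Ω → γ) (F : γ → α) (a : α) :
    pmfOf μ (fun ω => F (T ω)) a = pmfOf (fun w => pmfOf μ T w) F a := by
  simp only [pmfOf_eq_sum_ite]
  have : ∀ w : γ, (if F w = a then (∑ ω, if T ω = w then μ ω else 0) else 0)
      = ∑ ω, if F w = a then (if T ω = w then μ ω else 0) else 0 := by
    intro w; split <;> simp
  simp only [this]
  rw [Finset.sum_comm]
  refine Finset.sum_congr rfl fun ω _ => ?_
  rw [Finset.sum_eq_single (T ω)]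
  · simp
  · intro w _ hw
    simp [Ne.symm hw]
  · simp

lemma isPMF_pmfOf [Fintype γ] (hμ : IsPMF μ) (T : Ω → γ) :
    IsPMF (fun w => pmfOf μ T w) :=
  ⟨fun w => pmfOf_nonneg μ hμ.1 T w, sum_pmfOf μ hμ T⟩

end Base
section CMIcore
variable {Ω α β γ : Type} [Fintype Ω] [Fintype α] [DecidableEq α]
  [Fintype β] [DecidableEq β] [Fintype γ] [DecidableEq γ]
variable (μ : Ω → ℝ)

lemma cmi_nonneg (hμ : IsPMF μ) (X : Ω → α) (Y : Ω → β) (Z : Ω → γ) :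
    0 ≤ cmi μ X Y Z := by
  set p : α → β → γ → ℝ := fun a b c => pmfOf μ (fun ω => (X ω, Y ω, Z ω)) (a, b, c) with hp
  set q : γ → ℝ := fun c => pmfOf μ Z c with hq
  set r : α → γ → ℝ := fun a c => pmfOf μ (fun ω => (X ω, Z ω)) (a, c) with hr
  set s : β → γ → ℝ := fun b c => pmfOf μ (fun ω => (Y ω, Z ω)) (b, c) with hs
  have hp0 : ∀ a b c, 0 ≤ p a b c := fun a b c => pmfOf_nonneg μ hμ.1 _ _
  have hq0 : ∀ c, 0 ≤ q c := fun c => pmfOf_nonneg μ hμ.1 _ _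
  have hr0 : ∀ a c, 0 ≤ r a c := fun a c => pmfOf_nonneg μ hμ.1 _ _
  have hs0 : ∀ b c, 0 ≤ s b c := fun b c => pmfOf_nonneg μ hμ.1 _ _
  have hpr : ∀ a b c, p a b c ≤ r a c := fun a b c =>
    pmfOf_mono μ hμ.1 (fun ω h => by
      simp only [Prod.mk.injEq] at h ⊢; exact ⟨h.1, h.2.2⟩)
  have hps : ∀ a b c, p a b c ≤ s b c := fun a b c =>
    pmfOf_mono μ hμ.1 (fun ω h => by
      simp only [Prod.mk.injEq] at h ⊢; exact ⟨h.2.1, h.2.2⟩)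
  have hrq : ∀ a c, r a c ≤ q c := fun a c =>
    pmfOf_mono μ hμ.1 (fun ω h => by
      simp only [Prod.mk.injEq] at h; exact h.2)
  -- termwise lower bound
  have key : ∀ a b c, p a b c - r a c * s b c / q c
      ≤ p a b c * Real.log (p a b c * q c / (r a c * s b c)) := by
    intro a b c
    rcases eq_or_lt_of_le (hp0 a b c) with h0 | hpos
    · rw [← h0]
      simp only [zero_sub, zero_mul]
      have : 0 ≤ r a c * s b c / q c :=
        div_nonneg (mul_nonneg (hr0 a c) (hs0 b c)) (hq0 c)
      linarith
    · have hrpos : 0 < r a c := lt_of_lt_of_le hpos (hpr a b c)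
      have hspos : 0 < s b c := lt_of_lt_of_le hpos (hps a b c)
      have hqpos : 0 < q c := lt_of_lt_of_le hrpos (hrq a c)
      have hratio : 0 < r a c * s b c / (p a b c * q c) := by positivity
      have hlog : Real.log (r a c * s b c / (p a b c * q c))
          ≤ r a c * s b c / (p a b c * q c) - 1 := Real.log_le_sub_one_of_pos hratio
      have hflip : Real.log (p a b c * q c / (r a c * s b c))
          = - Real.log (r a c * s b c / (p a b c * q c)) := by
        rw [← Real.log_inv, inv_div]
      have h1 : 1 - r a c * s b c / (p a b c * q c)
          ≤ Real.log (p a b c * q c / (r a c * s b c)) := by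
        rw [hflip]; linarith
      have h2 : p a b c * (1 - r a c * s b c / (p a b c * q c))
          ≤ p a b c * Real.log (p a b c * q c / (r a c * s b c)) :=
        mul_le_mul_of_nonneg_left h1 (le_of_lt hpos)
      have h3 : p a b c * (1 - r a c * s b c / (p a b c * q c))
          = p a b c - r a c * s b c / q c := by
        field_simp
      linarith [h2, h3.symm.le.trans h2]
  have hsum1 : ∑ a, ∑ b, ∑ c, p a b c = 1 := by
    have := sum_pmfOf μ hμ (fun ω => (X ω, Y ω, Z ω))
    rwa [Fintype.sum_prod_type, Finset.sum_congr rfl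
      (fun a _ => Fintype.sum_prod_type (f := fun v => pmfOf μ (fun ω => (X ω, Y ω, Z ω)) (a, v)))] at this
  have hmargr : ∀ c, ∑ a, r a c = q c := by
    intro c
    show ∑ a, r a c = pmfOf μ Z c
    rw [pmfOf_fiber_sum μ Z X c]
    refine Finset.sum_congr rfl fun a _ => ?_
    exact (pmfOf_congr μ (fun ω => by simp [Prod.ext_iff, and_comm])).symm
  have hmargs : ∀ c, ∑ b, s b c = q c := by
    intro c
    show ∑ b, s b c = pmfOf μ Z c
    rw [pmfOf_fiber_sum μ Z Y c]
    refine Finset.sum_congr rfl fun b _ => ?_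
    exact (pmfOf_congr μ (fun ω => by simp [Prod.ext_iff, and_comm])).symm
  have hsum2 : ∑ a, ∑ b, ∑ c, r a c * s b c / q c = 1 := by
    have swap : ∑ a, ∑ b, ∑ c, r a c * s b c / q c
        = ∑ c, ∑ a, ∑ b, r a c * s b c / q c := by
      rw [show (∑ a, ∑ b, ∑ c, r a c * s b c / q c)
          = ∑ a, ∑ c, ∑ b, r a c * s b c / q c from
        Finset.sum_congr rfl fun a _ => Finset.sum_comm, Finset.sum_comm]
    rw [swap]
    have : ∀ c, ∑ a, ∑ b, r a c * s b c / q c = q c := by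
      intro c
      have : ∑ a, ∑ b, r a c * s b c / q c = (∑ a, r a c) * (∑ b, s b c) / q c := by
        rw [Finset.sum_mul, Finset.sum_div]
        refine Finset.sum_congr rfl fun a _ => ?_
        rw [Finset.mul_sum, Finset.sum_div]
      rw [this, hmargr, hmargs]
      rcases eq_or_lt_of_le (hq0 c) with h0 | hpos
      · rw [← h0]; simp
      · field_simp
    rw [Finset.sum_congr rfl fun c _ => this c]
    have := sum_pmfOf μ hμ Z
    exact this
  have : ∑ a, ∑ b, ∑ c, (p a b c - r a c * s b c / q c) = 0 := by
    simp only [Finset.sum_sub_distrib]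
    rw [hsum1, hsum2]; ring
  calc (0:ℝ) = ∑ a, ∑ b, ∑ c, (p a b c - r a c * s b c / q c) := this.symm
    _ ≤ ∑ a, ∑ b, ∑ c, p a b c * Real.log (p a b c * q c / (r a c * s b c)) := by
        refine Finset.sum_le_sum fun a _ => Finset.sum_le_sum fun b _ =>
          Finset.sum_le_sum fun c _ => key a b c
    _ = cmi μ X Y Z := rfl

end CMIcore
section CMIzero
variable {Ω α β γ β' γ' : Type} [Fintype Ω] [Fintype α] [DecidableEq α]
  [Fintype β] [DecidableEq β] [Fintype γ] [DecidableEq γ]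
  [Fintype β'] [DecidableEq β'] [Fintype γ'] [DecidableEq γ']
variable (μ : Ω → ℝ)

lemma cmi_eq_zero_of_indep (hμ : ∀ ω, 0 ≤ μ ω) {X : Ω → α} {Y : Ω → β} {Z : Ω → γ}
    (h : ∀ a b c, pmfOf μ (fun ω => (X ω, Y ω, Z ω)) (a, b, c) * pmfOf μ Z c
      = pmfOf μ (fun ω => (X ω, Z ω)) (a, c) * pmfOf μ (fun ω => (Y ω, Z ω)) (b, c)) :
    cmi μ X Y Z = 0 := by
  unfold cmi
  refine Finset.sum_eq_zero fun a _ => Finset.sum_eq_zero fun b _ =>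
    Finset.sum_eq_zero fun c _ => ?_
  rcases eq_or_lt_of_le (pmfOf_nonneg μ hμ (fun ω => (X ω, Y ω, Z ω)) (a, b, c)) with h0 | hpos
  · rw [← h0, zero_mul]
  · have hr : 0 < pmfOf μ (fun ω => (X ω, Z ω)) (a, c) :=
      lt_of_lt_of_le hpos (pmfOf_mono μ hμ (fun ω hw => by
        simp only [Prod.mk.injEq] at hw ⊢; exact ⟨hw.1, hw.2.2⟩))
    have hs : 0 < pmfOf μ (fun ω => (Y ω, Z ω)) (b, c) :=
      lt_of_lt_of_le hpos (pmfOf_mono μ hμ (fun ω hw => by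
        simp only [Prod.mk.injEq] at hw ⊢; exact ⟨hw.2.1, hw.2.2⟩))
    rw [h a b c, div_self (by positivity), Real.log_one, mul_zero]

lemma cmi_eq_zero_of_fun (hμ : ∀ ω, 0 ≤ μ ω) {X : Ω → α} {Y : Ω → β} {Z : Ω → γ}
    (k : γ → β) (hk : ∀ ω, Y ω = k (Z ω)) :
    cmi μ X Y Z = 0 := by
  refine cmi_eq_zero_of_indep μ hμ fun a b c => ?_
  have h1 : pmfOf μ (fun ω => (X ω, Y ω, Z ω)) (a, b, c)
      = if b = k c then pmfOf μ (fun ω => (X ω, Z ω)) (a, c) else 0 := by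
    split
    · next hb =>
      refine pmfOf_congr μ fun ω => ?_
      simp only [Prod.mk.injEq]
      constructor
      · rintro ⟨h1, _, h3⟩; exact ⟨h1, h3⟩
      · rintro ⟨h1, h3⟩; exact ⟨h1, by rw [hk ω, h3, ← hb], h3⟩
    · next hb =>
      unfold pmfOf
      rw [Finset.filter_eq_empty_iff.mpr, Finset.sum_empty]
      intro ω _
      simp only [Prod.mk.injEq, not_and]
      intro _ hY hZ
      exact hb (by rw [← hY, hk ω, hZ])
  have h2 : pmfOf μ (fun ω => (Y ω, Z ω)) (b, c)
      = if b = k c then pmfOf μ Z c else 0 := by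
    split
    · next hb =>
      refine pmfOf_congr μ fun ω => ?_
      simp only [Prod.mk.injEq]
      constructor
      · rintro ⟨_, h3⟩; exact h3
      · intro h3; exact ⟨by rw [hk ω, h3, ← hb], h3⟩
    · next hb =>
      unfold pmfOf
      rw [Finset.filter_eq_empty_iff.mpr, Finset.sum_empty]
      intro ω _
      simp only [Prod.mk.injEq, not_and]
      intro hY hZ
      exact hb (by rw [← hY, hk ω, hZ])
  rw [h1, h2]
  split <;> ring

lemma cmi_comm (X : Ω → α) (Y : Ω → β) (Z : Ω → γ) :
    cmi μ X Y Z = cmi μ Y X Z := by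
  unfold cmi
  rw [Finset.sum_comm]
  refine Finset.sum_congr rfl fun b _ => Finset.sum_congr rfl fun a _ =>
    Finset.sum_congr rfl fun c _ => ?_
  have h : pmfOf μ (fun ω => (X ω, Y ω, Z ω)) (a, b, c)
      = pmfOf μ (fun ω => (Y ω, X ω, Z ω)) (b, a, c) :=
    pmfOf_congr μ fun ω => by simp only [Prod.mk.injEq]; tauto
  rw [h, mul_comm (pmfOf μ (fun ω => (X ω, Z ω)) (a, c))]

lemma cmi_reindex2 (e : β ≃ β') (X : Ω → α) (Y : Ω → β) (Z : Ω → γ) :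
    cmi μ X (fun ω => e (Y ω)) Z = cmi μ X Y Z := by
  unfold cmi
  refine Finset.sum_congr rfl fun a _ => ?_
  refine (Fintype.sum_equiv e _ _ fun b => ?_).symm
  refine Finset.sum_congr rfl fun c _ => ?_
  have h1 : pmfOf μ (fun ω => (X ω, Y ω, Z ω)) (a, b, c)
      = pmfOf μ (fun ω => (X ω, e (Y ω), Z ω)) (a, e b, c) :=
    pmfOf_congr μ fun ω => by
      simp only [Prod.mk.injEq, EmbeddingLike.apply_eq_iff_eq]
  have h2 : pmfOf μ (fun ω => (Y ω, Z ω)) (b, c)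
      = pmfOf μ (fun ω => (e (Y ω), Z ω)) (e b, c) :=
    pmfOf_congr μ fun ω => by
      simp only [Prod.mk.injEq, EmbeddingLike.apply_eq_iff_eq]
  rw [h1, h2]

lemma cmi_reindex3 (e : γ ≃ γ') (X : Ω → α) (Y : Ω → β) (Z : Ω → γ) :
    cmi μ X Y (fun ω => e (Z ω)) = cmi μ X Y Z := by
  unfold cmi
  refine Finset.sum_congr rfl fun a _ => Finset.sum_congr rfl fun b _ => ?_
  refine (Fintype.sum_equiv e _ _ fun c => ?_).symm
  have h1 : pmfOf μ (fun ω => (X ω, Y ω, Z ω)) (a, b, c)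
      = pmfOf μ (fun ω => (X ω, Y ω, e (Z ω))) (a, b, e c) :=
    pmfOf_congr μ fun ω => by
      simp only [Prod.mk.injEq, EmbeddingLike.apply_eq_iff_eq]
  have h2 : pmfOf μ (fun ω => (X ω, Z ω)) (a, c)
      = pmfOf μ (fun ω => (X ω, e (Z ω))) (a, e c) :=
    pmfOf_congr μ fun ω => by
      simp only [Prod.mk.injEq, EmbeddingLike.apply_eq_iff_eq]
  have h3 : pmfOf μ (fun ω => (Y ω, Z ω)) (b, c)
      = pmfOf μ (fun ω => (Y ω, e (Z ω))) (b, e c) :=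
    pmfOf_congr μ fun ω => by
      simp only [Prod.mk.injEq, EmbeddingLike.apply_eq_iff_eq]
  have h4 : pmfOf μ Z c = pmfOf μ (fun ω => e (Z ω)) (e c) :=
    pmfOf_congr μ fun ω => by
      simp only [EmbeddingLike.apply_eq_iff_eq]
  rw [h1, h2, h3, h4]

lemma cmi_const (hμ : IsPMF μ) (X : Ω → α) (Y : Ω → β) :
    cmi μ X Y (fun _ => (0 : Fin 1)) = mi μ X Y := by
  unfold cmi mi
  refine Finset.sum_congr rfl fun a _ => Finset.sum_congr rfl fun b _ => ?_
  rw [show (Finset.univ : Finset (Fin 1)) = {0} from rfl, Finset.sum_singleton]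
  have h1 : pmfOf μ (fun ω => (X ω, Y ω, (0 : Fin 1))) (a, b, 0)
      = pmfOf μ (fun ω => (X ω, Y ω)) (a, b) :=
    pmfOf_congr μ fun ω => by simp [Prod.ext_iff]
  have h2 : pmfOf μ (fun _ : Ω => (0 : Fin 1)) 0 = 1 := by
    unfold pmfOf
    rw [Finset.filter_true_of_mem (fun _ _ => rfl)]
    exact hμ.2
  have h3 : pmfOf μ (fun ω => (X ω, (0 : Fin 1))) (a, 0) = pmfOf μ X a :=
    pmfOf_congr μ fun ω => by simp [Prod.ext_iff]
  have h4 : pmfOf μ (fun ω => (Y ω, (0 : Fin 1))) (b, 0) = pmfOf μ Y b :=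
    pmfOf_congr μ fun ω => by simp [Prod.ext_iff]
  rw [h1, h2, h3, h4, mul_one]

end CMIzero
section Chain
variable {Ω α β γ δ : Type} [Fintype Ω] [Fintype α] [DecidableEq α]
  [Fintype β] [DecidableEq β] [Fintype γ] [DecidableEq γ] [Fintype δ] [DecidableEq δ]
variable (μ : Ω → ℝ)

lemma cmi_chain (hμ : ∀ ω, 0 ≤ μ ω) (X : Ω → α) (W : Ω → δ) (Y : Ω → β) (Z : Ω → γ) :
    cmi μ X (fun ω => (W ω, Y ω)) Z
      = cmi μ X W Z + cmi μ X Y (fun ω => (W ω, Z ω)) := by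
  set M : α → δ → β → γ → ℝ :=
    fun a w b c => pmfOf μ (fun ω => (X ω, W ω, Y ω, Z ω)) (a, w, b, c) with hM
  set q : γ → ℝ := fun c => pmfOf μ Z c with hq
  set r : α → γ → ℝ := fun a c => pmfOf μ (fun ω => (X ω, Z ω)) (a, c) with hr
  set t : δ → γ → ℝ := fun w c => pmfOf μ (fun ω => (W ω, Z ω)) (w, c) with ht
  set R : α → δ → γ → ℝ := fun a w c => pmfOf μ (fun ω => (X ω, W ω, Z ω)) (a, w, c) with hR
  set S : δ → β → γ → ℝ := fun w b c => pmfOf μ (fun ω => (W ω, Y ω, Z ω)) (w, b, c) with hS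
  have hRm : ∀ a w c, R a w c = ∑ b, M a w b c := by
    intro a w c
    show pmfOf μ (fun ω => (X ω, W ω, Z ω)) (a, w, c) = _
    rw [pmfOf_fiber_sum μ (fun ω => (X ω, W ω, Z ω)) Y (a, w, c)]
    exact Finset.sum_congr rfl fun b _ =>
      pmfOf_congr μ fun ω => by first | exact Iff.rfl | (simp only [Prod.mk.injEq]; tauto)
  -- rewrite LHS
  have hLHS : cmi μ X (fun ω => (W ω, Y ω)) Z
      = ∑ a, ∑ w, ∑ b, ∑ c, M a w b c * Real.log (M a w b c * q c / (r a c * S w b c)) := by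
    unfold cmi
    refine Finset.sum_congr rfl fun a _ => ?_
    rw [Fintype.sum_prod_type]
    refine Finset.sum_congr rfl fun w _ => Finset.sum_congr rfl fun b _ =>
      Finset.sum_congr rfl fun c _ => ?_
    have h1 : pmfOf μ (fun ω => (X ω, (W ω, Y ω), Z ω)) (a, (w, b), c) = M a w b c :=
      pmfOf_congr μ fun ω => by first | exact Iff.rfl | (simp only [Prod.mk.injEq]; tauto)
    have h2 : pmfOf μ (fun ω => ((W ω, Y ω), Z ω)) ((w, b), c) = S w b c :=
      pmfOf_congr μ fun ω => by first | exact Iff.rfl | (simp only [Prod.mk.injEq]; tauto)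
    rw [h1, h2]
  -- rewrite first RHS term, expanding the marginal
  have hT1 : cmi μ X W Z
      = ∑ a, ∑ w, ∑ b, ∑ c, M a w b c * Real.log (R a w c * q c / (r a c * t w c)) := by
    have : cmi μ X W Z
        = ∑ a, ∑ w, ∑ c, R a w c * Real.log (R a w c * q c / (r a c * t w c)) := rfl
    rw [this]
    refine Finset.sum_congr rfl fun a _ => Finset.sum_congr rfl fun w _ => ?_
    rw [Finset.sum_comm]
    refine Finset.sum_congr rfl fun c _ => ?_
    rw [hRm a w c, Finset.sum_mul]
  -- rewrite second RHS term
  have hT2 : cmi μ X Y (fun ω => (W ω, Z ω))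
      = ∑ a, ∑ w, ∑ b, ∑ c, M a w b c * Real.log (M a w b c * t w c / (R a w c * S w b c)) := by
    unfold cmi
    refine Finset.sum_congr rfl fun a _ => ?_
    calc ∑ b, ∑ p : δ × γ,
          pmfOf μ (fun ω => (X ω, Y ω, W ω, Z ω)) (a, b, p) *
            Real.log (pmfOf μ (fun ω => (X ω, Y ω, W ω, Z ω)) (a, b, p) *
              pmfOf μ (fun ω => (W ω, Z ω)) p /
              (pmfOf μ (fun ω => (X ω, W ω, Z ω)) (a, p) *
                pmfOf μ (fun ω => (Y ω, W ω, Z ω)) (b, p)))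
        = ∑ b, ∑ w, ∑ c, M a w b c * Real.log (M a w b c * t w c / (R a w c * S w b c)) := by
          refine Finset.sum_congr rfl fun b _ => ?_
          rw [Fintype.sum_prod_type]
          refine Finset.sum_congr rfl fun w _ => Finset.sum_congr rfl fun c _ => ?_
          have h1 : pmfOf μ (fun ω => (X ω, Y ω, W ω, Z ω)) (a, b, (w, c)) = M a w b c :=
            pmfOf_congr μ fun ω => by first | exact Iff.rfl | (simp only [Prod.mk.injEq]; tauto)
          have h2 : pmfOf μ (fun ω => (X ω, W ω, Z ω)) (a, (w, c)) = R a w c :=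
            pmfOf_congr μ fun ω => by first | exact Iff.rfl | (simp only [Prod.mk.injEq]; tauto)
          have h3 : pmfOf μ (fun ω => (Y ω, W ω, Z ω)) (b, (w, c)) = S w b c :=
            pmfOf_congr μ fun ω => by first | exact Iff.rfl | (simp only [Prod.mk.injEq]; tauto)
          rw [h1, h2, h3]
      _ = ∑ w, ∑ b, ∑ c, M a w b c * Real.log (M a w b c * t w c / (R a w c * S w b c)) :=
          Finset.sum_comm
  rw [hLHS, hT1, hT2, ← Finset.sum_add_distrib]
  refine Finset.sum_congr rfl fun a _ => ?_
  rw [← Finset.sum_add_distrib]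
  refine Finset.sum_congr rfl fun w _ => ?_
  rw [← Finset.sum_add_distrib]
  refine Finset.sum_congr rfl fun b _ => ?_
  rw [← Finset.sum_add_distrib]
  refine Finset.sum_congr rfl fun c _ => ?_
  -- termwise identity
  rcases eq_or_lt_of_le (pmfOf_nonneg μ hμ (fun ω => (X ω, W ω, Y ω, Z ω)) (a, w, b, c))
    with h0 | hpos
  · have hMz : M a w b c = 0 := h0.symm
    rw [hMz]; ring
  · have hMpos : 0 < M a w b c := hpos
    have hRpos : 0 < R a w c := lt_of_lt_of_le hMpos (pmfOf_mono μ hμ (fun ω h => by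
      simp only [Prod.mk.injEq] at h ⊢; tauto))
    have hSpos : 0 < S w b c := lt_of_lt_of_le hMpos (pmfOf_mono μ hμ (fun ω h => by
      simp only [Prod.mk.injEq] at h ⊢; tauto))
    have hrpos : 0 < r a c := lt_of_lt_of_le hMpos (pmfOf_mono μ hμ (fun ω h => by
      simp only [Prod.mk.injEq] at h ⊢; tauto))
    have htpos : 0 < t w c := lt_of_lt_of_le hMpos (pmfOf_mono μ hμ (fun ω h => by
      simp only [Prod.mk.injEq] at h ⊢; tauto))
    have hqpos : 0 < q c := lt_of_lt_of_le hrpos (pmfOf_mono μ hμ (fun ω h => by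
      simp only [Prod.mk.injEq] at h; exact h.2))
    have e1 : Real.log (M a w b c * q c / (r a c * S w b c))
        = Real.log (M a w b c) + Real.log (q c) - Real.log (r a c) - Real.log (S w b c) := by
      rw [Real.log_div (by positivity) (by positivity),
        Real.log_mul hMpos.ne' hqpos.ne', Real.log_mul hrpos.ne' hSpos.ne']
      ring
    have e2 : Real.log (R a w c * q c / (r a c * t w c))
        = Real.log (R a w c) + Real.log (q c) - Real.log (r a c) - Real.log (t w c) := by
      rw [Real.log_div (by positivity) (by positivity),
        Real.log_mul hRpos.ne' hqpos.ne', Real.log_mul hrpos.ne' htpos.ne']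
      ring
    have e3 : Real.log (M a w b c * t w c / (R a w c * S w b c))
        = Real.log (M a w b c) + Real.log (t w c) - Real.log (R a w c) - Real.log (S w b c) := by
      rw [Real.log_div (by positivity) (by positivity),
        Real.log_mul hMpos.ne' htpos.ne', Real.log_mul hRpos.ne' hSpos.ne']
      ring
    rw [e1, e2, e3]
    ring

end Chain
section MIlemmas
variable {Ω α β γ δ : Type} [Fintype Ω] [Fintype α] [DecidableEq α]
  [Fintype β] [DecidableEq β] [Fintype γ] [DecidableEq γ] [Fintype δ] [DecidableEq δ]
variable (μ : Ω → ℝ)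

lemma cmi_swap2 (X : Ω → α) (Y₁ : Ω → β) (Y₂ : Ω → γ) (Z : Ω → δ) :
    cmi μ X (fun ω => (Y₁ ω, Y₂ ω)) Z = cmi μ X (fun ω => (Y₂ ω, Y₁ ω)) Z :=
  (cmi_reindex2 μ (Equiv.prodComm β γ) X (fun ω => (Y₁ ω, Y₂ ω)) Z).symm

lemma cmi_cond_pair_fin1 (X : Ω → α) (Y : Ω → β) (W : Ω → δ) :
    cmi μ X Y (fun ω => (W ω, (0 : Fin 1))) = cmi μ X Y W := by
  have hf : (fun ω => ((Equiv.prodUnique δ (Fin 1)).symm (W ω)))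
      = (fun ω => (W ω, (0 : Fin 1))) := by
    funext ω
    exact Prod.ext rfl (Subsingleton.elim _ _)
  rw [← hf]
  exact cmi_reindex3 μ (Equiv.prodUnique δ (Fin 1)).symm X Y W

lemma mi_comm (hμ : IsPMF μ) (X : Ω → α) (Y : Ω → β) : mi μ X Y = mi μ Y X := by
  rw [← cmi_const μ hμ X Y, ← cmi_const μ hμ Y X, cmi_comm]

lemma mi_chain (hμ : IsPMF μ) (X : Ω → α) (W : Ω → δ) (Y : Ω → β) :
    mi μ X (fun ω => (W ω, Y ω)) = mi μ X W + cmi μ X Y W := by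
  rw [← cmi_const μ hμ X (fun ω => (W ω, Y ω)), cmi_chain μ hμ.1 X W Y (fun _ => (0 : Fin 1)),
    cmi_const μ hμ X W, cmi_cond_pair_fin1 μ X Y W]

lemma mi_swap2 (hμ : IsPMF μ) (X : Ω → α) (Y₁ : Ω → β) (Y₂ : Ω → γ) :
    mi μ X (fun ω => (Y₁ ω, Y₂ ω)) = mi μ X (fun ω => (Y₂ ω, Y₁ ω)) := by
  rw [← cmi_const μ hμ X (fun ω => (Y₁ ω, Y₂ ω)), ← cmi_const μ hμ X (fun ω => (Y₂ ω, Y₁ ω)),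
    cmi_swap2]

end MIlemmas
section Transfer
variable {Ω κ α β γ : Type} [Fintype Ω] [Fintype κ] [DecidableEq κ] [Fintype α] [DecidableEq α]
  [Fintype β] [DecidableEq β] [Fintype γ] [DecidableEq γ]
variable (μ : Ω → ℝ)

lemma mi_comp (T : Ω → κ) (F : κ → α) (G : κ → β) :
    mi μ (fun ω => F (T ω)) (fun ω => G (T ω)) = mi (fun w => pmfOf μ T w) F G := by
  unfold mi
  refine Finset.sum_congr rfl fun a _ => Finset.sum_congr rfl fun b _ => ?_
  rw [pmfOf_comp μ T (fun w => (F w, G w)) (a, b), pmfOf_comp μ T F a, pmfOf_comp μ T G b]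

end Transfer

section Abstract
variable {Ω A' Z' B' E₃ : Type} [Fintype Ω] [Fintype A'] [DecidableEq A']
  [Fintype Z'] [DecidableEq Z'] [Fintype B'] [DecidableEq B'] [Fintype E₃] [DecidableEq E₃]

/-- Abstract form of the sufficiency argument. -/
lemma abstract_sufficiency (ν : Ω → ℝ) (hν : IsPMF ν)
    (x x' : Ω → A') (z z' : Ω → Z') (y : Ω → B') (ε₃ : Ω → E₃)
    (f : A' → E₃ → B') (hfun : ∀ ω, y ω = f (x' ω) (ε₃ ω))
    (h1 : cmi ν z z' x' = 0)
    (h2 : cmi ν x' z x = 0)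
    (h3 : cmi ν y z x = 0)
    (h5 : cmi ν x ε₃ (fun ω => (x' ω, z ω)) = 0)
    (hAIG : mi ν x x' = mi ν z z') :
    mi ν x y = mi ν z y := by
  -- Step 1: mi z x' ≥ mi z z'
  have s1a := mi_chain ν hν z x' z'
  have s1b := mi_chain ν hν z z' x'
  have s1c := mi_swap2 ν hν z x' z'
  have step1 : mi ν z z' ≤ mi ν z x' := by
    have : mi ν z x' + cmi ν z z' x' = mi ν z z' + cmi ν z x' z' := by
      rw [← s1a, ← s1b, s1c]
    have hnn := cmi_nonneg ν hν z x' z'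
    rw [h1] at this
    linarith
  -- Step 2: cmi x x' z = 0
  have s2a := mi_chain ν hν x' x z
  have s2b := mi_chain ν hν x' z x
  have s2c := mi_swap2 ν hν x' x z
  have hxz : mi ν x' x + cmi ν x' z x = mi ν x' z + cmi ν x' x z := by
    rw [← s2a, ← s2b, s2c]
  rw [h2, add_zero] at hxz
  have hge : mi ν x' x ≤ mi ν x' z := by
    calc mi ν x' x = mi ν x x' := mi_comm ν hν x' x
      _ = mi ν z z' := hAIG
      _ ≤ mi ν z x' := step1
      _ = mi ν x' z := mi_comm ν hν z x'
  have hcx : cmi ν x' x z = 0 := by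
    have hnn := cmi_nonneg ν hν x' x z
    linarith
  have hcx' : cmi ν x x' z = 0 := by rw [cmi_comm]; exact hcx
  -- Step 3: DPI, cmi x y z = 0
  have s3a := cmi_chain ν hν.1 x (fun ω => (x' ω, ε₃ ω)) y z
  have s3b := cmi_chain ν hν.1 x y (fun ω => (x' ω, ε₃ ω)) z
  have s3c := cmi_swap2 ν x (fun ω => (x' ω, ε₃ ω)) y z
  have hdet : cmi ν x y (fun ω => ((x' ω, ε₃ ω), z ω)) = 0 :=
    cmi_eq_zero_of_fun ν hν.1 (fun p => f p.1.1 p.1.2) (fun ω => hfun ω)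
  have hsplit := cmi_chain ν hν.1 x x' ε₃ z
  have hpz : cmi ν x (fun ω => (x' ω, ε₃ ω)) z = 0 := by
    rw [hsplit, hcx', h5]; ring
  have hxyz : cmi ν x y z = 0 := by
    have heq : cmi ν x (fun ω => (x' ω, ε₃ ω)) z
        + cmi ν x y (fun ω => ((x' ω, ε₃ ω), z ω))
        = cmi ν x y z + cmi ν x (fun ω => (x' ω, ε₃ ω)) (fun ω => (y ω, z ω)) := by
      rw [← s3a, ← s3b, s3c]
    rw [hpz, hdet] at heq
    have hnn1 := cmi_nonneg ν hν x y z
    have hnn2 := cmi_nonneg ν hν x (fun ω => (x' ω, ε₃ ω)) (fun ω => (y ω, z ω))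
    linarith
  have hyxz : cmi ν y x z = 0 := by rw [cmi_comm]; exact hxyz
  -- Step 4: conclude
  have s4a := mi_chain ν hν y x z
  have s4b := mi_chain ν hν y z x
  have s4c := mi_swap2 ν hν y x z
  have hfin : mi ν y x + cmi ν y z x = mi ν y z + cmi ν y x z := by
    rw [← s4a, ← s4b, s4c]
  rw [h3, hyxz, add_zero, add_zero] at hfin
  rw [mi_comm ν hν x y, mi_comm ν hν z y]
  exact hfin

end Abstract
section ProdComp

/-- fiber-sum rewrite -/
lemma sum_comp_fiber {E Z : Type} [Fintype E] [Fintype Z] [DecidableEq Z]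
    (F : Z → ℝ) (h : E → Z) (νv : E → ℝ) :
    ∑ e, F (h e) * νv e = ∑ ζ, F ζ * ∑ e, if h e = ζ then νv e else 0 := by
  have : ∀ ζ, F ζ * (∑ e, if h e = ζ then νv e else 0)
      = ∑ e, if h e = ζ then F (h e) * νv e else 0 := by
    intro ζ
    rw [Finset.mul_sum]
    refine Finset.sum_congr rfl fun e _ => ?_
    split
    · next he => rw [he]
    · rw [mul_zero]
  simp only [this]
  rw [Finset.sum_comm]
  refine Finset.sum_congr rfl fun e _ => ?_
  rw [Finset.sum_eq_single (h e)]
  · simp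
  · intro ζ _ hζ; simp [Ne.symm hζ]
  · simp

/-- summing a fiber pmf over all values -/
lemma sum_Gm {E Z : Type} [Fintype E] [Fintype Z] [DecidableEq Z]
    (h : E → Z) (νv : E → ℝ) :
    ∑ ζ, (∑ e, if h e = ζ then νv e else 0) = ∑ e, νv e := by
  have := sum_comp_fiber (fun _ => (1:ℝ)) h νv
  simpa using this.symm

variable {A E E' Z B : Type}
  [Fintype A] [DecidableEq A] [Fintype E] [DecidableEq E] [Fintype E'] [DecidableEq E']
  [Fintype Z] [DecidableEq Z] [Fintype B] [DecidableEq B]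
variable (ν₁ ν₂ : E → ℝ) (ν₃ : E' → ℝ) (ρ : A × A → ℝ) (g : A → E → Z) (f : A → E' → B)

lemma pmf_prod_expand {κ : Type} [DecidableEq κ]
    (G : E × E × E' × A × A → κ) (v : κ) :
    pmfOf (fun w : E × E × E' × A × A => ν₁ w.1 * ν₂ w.2.1 * ν₃ w.2.2.1 * ρ w.2.2.2) G v
      = ∑ e₁, ∑ e₂, ∑ e₃, ∑ a, ∑ a',
          if G (e₁, e₂, e₃, a, a') = v then ν₁ e₁ * ν₂ e₂ * ν₃ e₃ * ρ (a, a') else 0 := by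
  rw [pmfOf_eq_sum_ite, Fintype.sum_prod_type]
  refine Finset.sum_congr rfl fun e₁ _ => ?_
  rw [Fintype.sum_prod_type]
  refine Finset.sum_congr rfl fun e₂ _ => ?_
  rw [Fintype.sum_prod_type]
  refine Finset.sum_congr rfl fun e₃ _ => ?_
  rw [Fintype.sum_prod_type]

lemma pmf_prod_expand2 {κ : Type} [DecidableEq κ]
    (G : E × E × E' × A × A → κ) (v : κ) :
    pmfOf (fun w : E × E × E' × A × A => ν₁ w.1 * ν₂ w.2.1 * ν₃ w.2.2.1 * ρ w.2.2.2) G v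
      = ∑ a, ∑ a', ∑ e₁, ∑ e₂, ∑ e₃,
          if G (e₁, e₂, e₃, a, a') = v then ν₁ e₁ * ν₂ e₂ * ν₃ e₃ * ρ (a, a') else 0 := by
  rw [pmf_prod_expand]
  rw [show (∑ e₁, ∑ e₂, ∑ e₃, ∑ a, ∑ a',
      if G (e₁, e₂, e₃, a, a') = v then ν₁ e₁ * ν₂ e₂ * ν₃ e₃ * ρ (a, a') else 0)
    = ∑ e₁, ∑ e₂, ∑ a, ∑ e₃, ∑ a', _ from
    Finset.sum_congr rfl fun e₁ _ => Finset.sum_congr rfl fun e₂ _ => Finset.sum_comm]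
  rw [show (∑ e₁, ∑ e₂, ∑ a, ∑ e₃, ∑ a',
      if G (e₁, e₂, e₃, a, a') = v then ν₁ e₁ * ν₂ e₂ * ν₃ e₃ * ρ (a, a') else 0)
    = ∑ e₁, ∑ a, ∑ e₂, ∑ e₃, ∑ a', _ from
    Finset.sum_congr rfl fun e₁ _ => Finset.sum_comm]
  rw [show (∑ e₁, ∑ a, ∑ e₂, ∑ e₃, ∑ a',
      if G (e₁, e₂, e₃, a, a') = v then ν₁ e₁ * ν₂ e₂ * ν₃ e₃ * ρ (a, a') else 0)
    = ∑ a, ∑ e₁, ∑ e₂, ∑ e₃, ∑ a', _ from Finset.sum_comm]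
  refine Finset.sum_congr rfl fun a _ => ?_
  rw [show (∑ e₁, ∑ e₂, ∑ e₃, ∑ a',
      if G (e₁, e₂, e₃, a, a') = v then ν₁ e₁ * ν₂ e₂ * ν₃ e₃ * ρ (a, a') else 0)
    = ∑ e₁, ∑ e₂, ∑ a', ∑ e₃, _ from
    Finset.sum_congr rfl fun e₁ _ => Finset.sum_congr rfl fun e₂ _ => Finset.sum_comm]
  rw [show (∑ e₁, ∑ e₂, ∑ a', ∑ e₃,
      if G (e₁, e₂, e₃, a, a') = v then ν₁ e₁ * ν₂ e₂ * ν₃ e₃ * ρ (a, a') else 0)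
    = ∑ e₁, ∑ a', ∑ e₂, ∑ e₃, _ from
    Finset.sum_congr rfl fun e₁ _ => Finset.sum_comm]
  rw [show (∑ e₁, ∑ a', ∑ e₂, ∑ e₃,
      if G (e₁, e₂, e₃, a, a') = v then ν₁ e₁ * ν₂ e₂ * ν₃ e₃ * ρ (a, a') else 0)
    = ∑ a', ∑ e₁, ∑ e₂, ∑ e₃, _ from Finset.sum_comm]

end ProdComp
section Masters
variable {A E E' Z B : Type}
  [Fintype A] [DecidableEq A] [Fintype E] [DecidableEq E] [Fintype E'] [DecidableEq E']
  [Fintype Z] [DecidableEq Z] [Fintype B] [DecidableEq B]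
variable (ν₁ ν₂ : E → ℝ) (ν₃ : E' → ℝ) (ρ : A × A → ℝ) (g : A → E → Z) (f : A → E' → B)

lemma sum_comp_fiber_ite {E₀ Z₀ : Type} [Fintype E₀] [Fintype Z₀] [DecidableEq Z₀]
    (c : Z₀ → Prop) [DecidablePred c] (k : ℝ) (h : E₀ → Z₀) (νv : E₀ → ℝ) :
    ∑ e, (if c (h e) then k else 0) * νv e
      = ∑ ζ, (if c ζ then k else 0) * ∑ e, if h e = ζ then νv e else 0 :=
  sum_comp_fiber (fun ζ => if c ζ then k else 0) h νv

lemma sum_kill_one {E₀ : Type} [Fintype E₀] (νo : E₀ → ℝ) (ho : ∑ e, νo e = 1)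
    (c : Prop) [Decidable c] (k k' : ℝ) :
    (∑ e, if c then k * νo e * k' else 0) = if c then k * k' else 0 := by
  split
  · calc ∑ e, k * νo e * k'
        = ∑ e, νo e * (k * k') := Finset.sum_congr rfl fun e _ => by ring
      _ = k * k' := by rw [← Finset.sum_mul, ho, one_mul]
  · simp

lemma masterM1 {κ : Type} [DecidableEq κ] (hν₃ : ∑ e, ν₃ e = 1)
    (K : A × A × Z × Z → κ) (v : κ) :
    pmfOf (fun w : E × E × E' × A × A => ν₁ w.1 * ν₂ w.2.1 * ν₃ w.2.2.1 * ρ w.2.2.2)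
      (fun w => K (w.2.2.2.1, w.2.2.2.2, g w.2.2.2.1 w.1, g w.2.2.2.2 w.2.1)) v
      = ∑ a, ∑ a', ∑ ζ, ∑ ζ',
          if K (a, a', ζ, ζ') = v then
            ρ (a, a') * (∑ e, if g a e = ζ then ν₁ e else 0)
              * (∑ e, if g a' e = ζ' then ν₂ e else 0)
          else 0 := by
  rw [pmf_prod_expand2]
  refine Finset.sum_congr rfl fun a _ => Finset.sum_congr rfl fun a' _ => ?_
  calc ∑ e₁, ∑ e₂, ∑ e₃,
        (if K ((e₁, e₂, e₃, a, a').2.2.2.1, (e₁, e₂, e₃, a, a').2.2.2.2,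
            g (e₁, e₂, e₃, a, a').2.2.2.1 (e₁, e₂, e₃, a, a').1,
            g (e₁, e₂, e₃, a, a').2.2.2.2 (e₁, e₂, e₃, a, a').2.1) = v
          then ν₁ e₁ * ν₂ e₂ * ν₃ e₃ * ρ (a, a') else 0)
      = ∑ e₁, ∑ e₂, ∑ e₃,
          (if K (a, a', g a e₁, g a' e₂) = v
            then ν₁ e₁ * ν₂ e₂ * ν₃ e₃ * ρ (a, a') else 0) := rfl
    _ = ∑ e₁, ∑ e₂,
          (if K (a, a', g a e₁, g a' e₂) = v then ν₁ e₁ * ν₂ e₂ * ρ (a, a') else 0) :=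
        Finset.sum_congr rfl fun e₁ _ => Finset.sum_congr rfl fun e₂ _ =>
          sum_kill_one ν₃ hν₃ _ (ν₁ e₁ * ν₂ e₂) (ρ (a, a'))
    _ = ∑ e₁, ∑ e₂,
          (if K (a, a', g a e₁, g a' e₂) = v then ν₁ e₁ * ρ (a, a') else 0) * ν₂ e₂ :=
        Finset.sum_congr rfl fun e₁ _ => Finset.sum_congr rfl fun e₂ _ => by
          split <;> ring
    _ = ∑ e₁, ∑ ζ', (if K (a, a', g a e₁, ζ') = v then ν₁ e₁ * ρ (a, a') else 0)
          * ∑ e, if g a' e = ζ' then ν₂ e else 0 :=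
        Finset.sum_congr rfl fun e₁ _ =>
          sum_comp_fiber_ite (fun ζ' => K (a, a', g a e₁, ζ') = v)
            (ν₁ e₁ * ρ (a, a')) (g a') ν₂
    _ = ∑ e₁, ∑ ζ',
          (if K (a, a', g a e₁, ζ') = v then
            ρ (a, a') * ∑ e, if g a' e = ζ' then ν₂ e else 0 else 0) * ν₁ e₁ :=
        Finset.sum_congr rfl fun e₁ _ => Finset.sum_congr rfl fun ζ' _ => by
          split <;> ring
    _ = ∑ ζ', ∑ e₁,
          (if K (a, a', g a e₁, ζ') = v then
            ρ (a, a') * ∑ e, if g a' e = ζ' then ν₂ e else 0 else 0) * ν₁ e₁ :=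
        Finset.sum_comm
    _ = ∑ ζ', ∑ ζ, (if K (a, a', ζ, ζ') = v then
            ρ (a, a') * ∑ e, if g a' e = ζ' then ν₂ e else 0 else 0)
          * ∑ e, if g a e = ζ then ν₁ e else 0 :=
        Finset.sum_congr rfl fun ζ' _ =>
          sum_comp_fiber_ite (fun ζ => K (a, a', ζ, ζ') = v)
            (ρ (a, a') * ∑ e, if g a' e = ζ' then ν₂ e else 0) (g a) ν₁
    _ = ∑ ζ, ∑ ζ', (if K (a, a', ζ, ζ') = v then
            ρ (a, a') * ∑ e, if g a e = ζ then ν₁ e else 0 else 0)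
          * ∑ e, if g a' e = ζ' then ν₂ e else 0 := by
        rw [Finset.sum_comm]
        refine Finset.sum_congr rfl fun ζ _ => Finset.sum_congr rfl fun ζ' _ => by
          split <;> ring
    _ = ∑ ζ, ∑ ζ', if K (a, a', ζ, ζ') = v then
            ρ (a, a') * (∑ e, if g a e = ζ then ν₁ e else 0)
              * (∑ e, if g a' e = ζ' then ν₂ e else 0) else 0 :=
        Finset.sum_congr rfl fun ζ _ => Finset.sum_congr rfl fun ζ' _ => by
          split <;> ring

end Masters
section Masters2
variable {A E E' Z B : Type}
  [Fintype A] [DecidableEq A] [Fintype E] [DecidableEq E] [Fintype E'] [DecidableEq E']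
  [Fintype Z] [DecidableEq Z] [Fintype B] [DecidableEq B]
variable (ν₁ ν₂ : E → ℝ) (ν₃ : E' → ℝ) (ρ : A × A → ℝ) (g : A → E → Z) (f : A → E' → B)

lemma masterM2 {κ : Type} [DecidableEq κ] (hν₂ : ∑ e, ν₂ e = 1)
    (K : A × A × Z × B → κ) (v : κ) :
    pmfOf (fun w : E × E × E' × A × A => ν₁ w.1 * ν₂ w.2.1 * ν₃ w.2.2.1 * ρ w.2.2.2)
      (fun w => K (w.2.2.2.1, w.2.2.2.2, g w.2.2.2.1 w.1, f w.2.2.2.2 w.2.2.1)) v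
      = ∑ a, ∑ a', ∑ ζ, ∑ b,
          if K (a, a', ζ, b) = v then
            ρ (a, a') * (∑ e, if g a e = ζ then ν₁ e else 0)
              * (∑ e, if f a' e = b then ν₃ e else 0)
          else 0 := by
  rw [pmf_prod_expand2]
  refine Finset.sum_congr rfl fun a _ => Finset.sum_congr rfl fun a' _ => ?_
  calc ∑ e₁, ∑ e₂, ∑ e₃,
        (if K ((e₁, e₂, e₃, a, a').2.2.2.1, (e₁, e₂, e₃, a, a').2.2.2.2,
            g (e₁, e₂, e₃, a, a').2.2.2.1 (e₁, e₂, e₃, a, a').1,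
            f (e₁, e₂, e₃, a, a').2.2.2.2 (e₁, e₂, e₃, a, a').2.2.1) = v
          then ν₁ e₁ * ν₂ e₂ * ν₃ e₃ * ρ (a, a') else 0)
      = ∑ e₁, ∑ e₂, ∑ e₃,
          (if K (a, a', g a e₁, f a' e₃) = v
            then ν₁ e₁ * ν₂ e₂ * ν₃ e₃ * ρ (a, a') else 0) := rfl
    _ = ∑ e₁, ∑ e₃, ∑ e₂,
          (if K (a, a', g a e₁, f a' e₃) = v
            then ν₁ e₁ * ν₂ e₂ * (ν₃ e₃ * ρ (a, a')) else 0) := by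
        refine Finset.sum_congr rfl fun e₁ _ => ?_
        rw [Finset.sum_comm]
        exact Finset.sum_congr rfl fun e₃ _ => Finset.sum_congr rfl fun e₂ _ => by
          split <;> ring
    _ = ∑ e₁, ∑ e₃,
          (if K (a, a', g a e₁, f a' e₃) = v then ν₁ e₁ * (ν₃ e₃ * ρ (a, a')) else 0) :=
        Finset.sum_congr rfl fun e₁ _ => Finset.sum_congr rfl fun e₃ _ =>
          sum_kill_one ν₂ hν₂ _ (ν₁ e₁) (ν₃ e₃ * ρ (a, a'))
    _ = ∑ e₁, ∑ e₃,
          (if K (a, a', g a e₁, f a' e₃) = v then ν₁ e₁ * ρ (a, a') else 0) * ν₃ e₃ :=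
        Finset.sum_congr rfl fun e₁ _ => Finset.sum_congr rfl fun e₃ _ => by
          split <;> ring
    _ = ∑ e₁, ∑ b, (if K (a, a', g a e₁, b) = v then ν₁ e₁ * ρ (a, a') else 0)
          * ∑ e, if f a' e = b then ν₃ e else 0 :=
        Finset.sum_congr rfl fun e₁ _ =>
          sum_comp_fiber_ite (fun b => K (a, a', g a e₁, b) = v)
            (ν₁ e₁ * ρ (a, a')) (f a') ν₃
    _ = ∑ b, ∑ e₁,
          (if K (a, a', g a e₁, b) = v then
            ρ (a, a') * ∑ e, if f a' e = b then ν₃ e else 0 else 0) * ν₁ e₁ := by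
        rw [Finset.sum_comm]
        exact Finset.sum_congr rfl fun b _ => Finset.sum_congr rfl fun e₁ _ => by
          split <;> ring
    _ = ∑ b, ∑ ζ, (if K (a, a', ζ, b) = v then
            ρ (a, a') * ∑ e, if f a' e = b then ν₃ e else 0 else 0)
          * ∑ e, if g a e = ζ then ν₁ e else 0 :=
        Finset.sum_congr rfl fun b _ =>
          sum_comp_fiber_ite (fun ζ => K (a, a', ζ, b) = v)
            (ρ (a, a') * ∑ e, if f a' e = b then ν₃ e else 0) (g a) ν₁
    _ = ∑ ζ, ∑ b, if K (a, a', ζ, b) = v then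
            ρ (a, a') * (∑ e, if g a e = ζ then ν₁ e else 0)
              * (∑ e, if f a' e = b then ν₃ e else 0) else 0 := by
        rw [Finset.sum_comm]
        exact Finset.sum_congr rfl fun ζ _ => Finset.sum_congr rfl fun b _ => by
          split <;> ring

lemma masterM3 {κ : Type} [DecidableEq κ] (hν₂ : ∑ e, ν₂ e = 1)
    (K : A × A × Z × E' → κ) (v : κ) :
    pmfOf (fun w : E × E × E' × A × A => ν₁ w.1 * ν₂ w.2.1 * ν₃ w.2.2.1 * ρ w.2.2.2)
      (fun w => K (w.2.2.2.1, w.2.2.2.2, g w.2.2.2.1 w.1, w.2.2.1)) v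
      = ∑ a, ∑ a', ∑ ζ, ∑ e₃,
          if K (a, a', ζ, e₃) = v then
            ρ (a, a') * (∑ e, if g a e = ζ then ν₁ e else 0) * ν₃ e₃
          else 0 := by
  rw [pmf_prod_expand2]
  refine Finset.sum_congr rfl fun a _ => Finset.sum_congr rfl fun a' _ => ?_
  calc ∑ e₁, ∑ e₂, ∑ e₃,
        (if K ((e₁, e₂, e₃, a, a').2.2.2.1, (e₁, e₂, e₃, a, a').2.2.2.2,
            g (e₁, e₂, e₃, a, a').2.2.2.1 (e₁, e₂, e₃, a, a').1,
            (e₁, e₂, e₃, a, a').2.2.1) = v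
          then ν₁ e₁ * ν₂ e₂ * ν₃ e₃ * ρ (a, a') else 0)
      = ∑ e₁, ∑ e₂, ∑ e₃,
          (if K (a, a', g a e₁, e₃) = v
            then ν₁ e₁ * ν₂ e₂ * ν₃ e₃ * ρ (a, a') else 0) := rfl
    _ = ∑ e₁, ∑ e₃, ∑ e₂,
          (if K (a, a', g a e₁, e₃) = v
            then ν₁ e₁ * ν₂ e₂ * (ν₃ e₃ * ρ (a, a')) else 0) := by
        refine Finset.sum_congr rfl fun e₁ _ => ?_
        rw [Finset.sum_comm]
        exact Finset.sum_congr rfl fun e₃ _ => Finset.sum_congr rfl fun e₂ _ => by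
          split <;> ring
    _ = ∑ e₁, ∑ e₃,
          (if K (a, a', g a e₁, e₃) = v then ν₁ e₁ * (ν₃ e₃ * ρ (a, a')) else 0) :=
        Finset.sum_congr rfl fun e₁ _ => Finset.sum_congr rfl fun e₃ _ =>
          sum_kill_one ν₂ hν₂ _ (ν₁ e₁) (ν₃ e₃ * ρ (a, a'))
    _ = ∑ e₃, ∑ e₁,
          (if K (a, a', g a e₁, e₃) = v then ν₃ e₃ * ρ (a, a') else 0) * ν₁ e₁ := by
        rw [Finset.sum_comm]
        exact Finset.sum_congr rfl fun e₃ _ => Finset.sum_congr rfl fun e₁ _ => by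
          split <;> ring
    _ = ∑ e₃, ∑ ζ, (if K (a, a', ζ, e₃) = v then ν₃ e₃ * ρ (a, a') else 0)
          * ∑ e, if g a e = ζ then ν₁ e else 0 :=
        Finset.sum_congr rfl fun e₃ _ =>
          sum_comp_fiber_ite (fun ζ => K (a, a', ζ, e₃) = v)
            (ν₃ e₃ * ρ (a, a')) (g a) ν₁
    _ = ∑ ζ, ∑ e₃, if K (a, a', ζ, e₃) = v then
            ρ (a, a') * (∑ e, if g a e = ζ then ν₁ e else 0) * ν₃ e₃ else 0 := by
        rw [Finset.sum_comm]
        exact Finset.sum_congr rfl fun ζ _ => Finset.sum_congr rfl fun e₃ _ => by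
          split <;> ring

end Masters2
section Concrete
variable {A E E' Z B : Type}
  [Fintype A] [DecidableEq A] [Fintype E] [DecidableEq E] [Fintype E'] [DecidableEq E']
  [Fintype Z] [DecidableEq Z] [Fintype B] [DecidableEq B]
variable (ν₁ ν₂ : E → ℝ) (ν₃ : E' → ℝ) (ρ : A × A → ℝ) (g : A → E → Z) (f : A → E' → B)

-- c1 : P(z, z', x')
lemma conc1 (hν₃ : ∑ e, ν₃ e = 1) (ζ ζ' : Z) (a' : A) :
    pmfOf (fun w : E × E × E' × A × A => ν₁ w.1 * ν₂ w.2.1 * ν₃ w.2.2.1 * ρ w.2.2.2)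
      (fun w => (g w.2.2.2.1 w.1, g w.2.2.2.2 w.2.1, w.2.2.2.2)) (ζ, ζ', a')
      = (∑ a, ρ (a, a') * (∑ e, if g a e = ζ then ν₁ e else 0))
          * (∑ e, if g a' e = ζ' then ν₂ e else 0) := by
  rw [masterM1 ν₁ ν₂ ν₃ ρ g hν₃ (fun t => (t.2.2.1, t.2.2.2, t.2.1)) (ζ, ζ', a')]
  refine Eq.trans (Finset.sum_congr rfl fun i _ => ?_) (Finset.sum_mul _ _ _).symm
  refine (Fintype.sum_eq_single a' fun x hx => ?_).trans ?_
  · exact Finset.sum_eq_zero fun _ _ => Finset.sum_eq_zero fun _ _ => by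
      simp [Prod.mk.injEq, hx]
  refine (Fintype.sum_eq_single ζ fun x hx => ?_).trans ?_
  · exact Finset.sum_eq_zero fun _ _ => by simp [Prod.mk.injEq, hx]
  refine (Fintype.sum_eq_single ζ' fun x hx => by simp [Prod.mk.injEq, hx]).trans ?_
  rw [if_pos rfl]

-- c2 : P(x')
include g in
lemma conc2 (hν₁ : ∑ e, ν₁ e = 1) (hν₂ : ∑ e, ν₂ e = 1) (hν₃ : ∑ e, ν₃ e = 1) (a' : A) :
    pmfOf (fun w : E × E × E' × A × A => ν₁ w.1 * ν₂ w.2.1 * ν₃ w.2.2.1 * ρ w.2.2.2)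
      (fun w => w.2.2.2.2) a'
      = ∑ a, ρ (a, a') := by
  rw [masterM1 ν₁ ν₂ ν₃ ρ g hν₃ (fun t => t.2.1) a']
  refine Finset.sum_congr rfl fun i _ => ?_
  refine (Fintype.sum_eq_single a' fun x hx => ?_).trans ?_
  · exact Finset.sum_eq_zero fun _ _ => Finset.sum_eq_zero fun _ _ => by simp [hx]
  trans (∑ k : Z, ρ (i, a') * (∑ e, if g i e = k then ν₁ e else 0))
  · refine Finset.sum_congr rfl fun k _ => ?_
    trans (∑ l : Z, (ρ (i, a') * (∑ e, if g i e = k then ν₁ e else 0))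
        * (∑ e, if g a' e = l then ν₂ e else 0))
    · exact Finset.sum_congr rfl fun l _ => by rw [if_pos rfl] <;> ring
    rw [← Finset.mul_sum, sum_Gm (g a') ν₂, hν₂, mul_one]
  rw [← Finset.mul_sum, sum_Gm (g i) ν₁, hν₁, mul_one]

-- c3 : P(z, x')  (also used as c12 : P((x', z)) with swapped value tuple)
lemma conc3 (hν₂ : ∑ e, ν₂ e = 1) (hν₃ : ∑ e, ν₃ e = 1) (ζ : Z) (a' : A) :
    pmfOf (fun w : E × E × E' × A × A => ν₁ w.1 * ν₂ w.2.1 * ν₃ w.2.2.1 * ρ w.2.2.2)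
      (fun w => (g w.2.2.2.1 w.1, w.2.2.2.2)) (ζ, a')
      = ∑ a, ρ (a, a') * (∑ e, if g a e = ζ then ν₁ e else 0) := by
  rw [masterM1 ν₁ ν₂ ν₃ ρ g hν₃ (fun t => (t.2.2.1, t.2.1)) (ζ, a')]
  refine Finset.sum_congr rfl fun i _ => ?_
  refine (Fintype.sum_eq_single a' fun x hx => ?_).trans ?_
  · exact Finset.sum_eq_zero fun _ _ => Finset.sum_eq_zero fun _ _ => by
      simp [Prod.mk.injEq, hx]
  refine (Fintype.sum_eq_single ζ fun x hx => ?_).trans ?_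
  · exact Finset.sum_eq_zero fun _ _ => by simp [Prod.mk.injEq, hx]
  refine Eq.trans (Finset.sum_congr rfl fun l _ => if_pos rfl) ?_
  rw [← Finset.mul_sum, sum_Gm (g a') ν₂, hν₂, mul_one]

-- c12 : P((x', z))
lemma conc12 (hν₂ : ∑ e, ν₂ e = 1) (hν₃ : ∑ e, ν₃ e = 1) (ζ : Z) (a' : A) :
    pmfOf (fun w : E × E × E' × A × A => ν₁ w.1 * ν₂ w.2.1 * ν₃ w.2.2.1 * ρ w.2.2.2)
      (fun w => (w.2.2.2.2, g w.2.2.2.1 w.1)) (a', ζ)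
      = ∑ a, ρ (a, a') * (∑ e, if g a e = ζ then ν₁ e else 0) := by
  rw [masterM1 ν₁ ν₂ ν₃ ρ g hν₃ (fun t => (t.2.1, t.2.2.1)) (a', ζ)]
  refine Finset.sum_congr rfl fun i _ => ?_
  refine (Fintype.sum_eq_single a' fun x hx => ?_).trans ?_
  · exact Finset.sum_eq_zero fun _ _ => Finset.sum_eq_zero fun _ _ => by
      simp [Prod.mk.injEq, hx]
  refine (Fintype.sum_eq_single ζ fun x hx => ?_).trans ?_
  · exact Finset.sum_eq_zero fun _ _ => by simp [Prod.mk.injEq, hx]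
  refine Eq.trans (Finset.sum_congr rfl fun l _ => if_pos rfl) ?_
  rw [← Finset.mul_sum, sum_Gm (g a') ν₂, hν₂, mul_one]

-- c4 : P(z', x')
lemma conc4 (hν₁ : ∑ e, ν₁ e = 1) (hν₃ : ∑ e, ν₃ e = 1) (ζ' : Z) (a' : A) :
    pmfOf (fun w : E × E × E' × A × A => ν₁ w.1 * ν₂ w.2.1 * ν₃ w.2.2.1 * ρ w.2.2.2)
      (fun w => (g w.2.2.2.2 w.2.1, w.2.2.2.2)) (ζ', a')
      = (∑ a, ρ (a, a')) * (∑ e, if g a' e = ζ' then ν₂ e else 0) := by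
  rw [masterM1 ν₁ ν₂ ν₃ ρ g hν₃ (fun t => (t.2.2.2, t.2.1)) (ζ', a')]
  refine Eq.trans (Finset.sum_congr rfl fun i _ => ?_) (Finset.sum_mul _ _ _).symm
  refine (Fintype.sum_eq_single a' fun x hx => ?_).trans ?_
  · exact Finset.sum_eq_zero fun _ _ => Finset.sum_eq_zero fun _ _ => by
      simp [Prod.mk.injEq, hx]
  trans (∑ k : Z, ρ (i, a') * (∑ e, if g a' e = ζ' then ν₂ e else 0)
      * (∑ e, if g i e = k then ν₁ e else 0))
  · refine Finset.sum_congr rfl fun k _ => ?_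
    refine (Fintype.sum_eq_single ζ' fun x hx => by simp [Prod.mk.injEq, hx]).trans ?_
    rw [if_pos rfl] <;> ring
  rw [← Finset.mul_sum, sum_Gm (g i) ν₁, hν₁, mul_one]

-- c6 : P(x)
include g in
lemma conc6 (hν₁ : ∑ e, ν₁ e = 1) (hν₂ : ∑ e, ν₂ e = 1) (hν₃ : ∑ e, ν₃ e = 1) (a : A) :
    pmfOf (fun w : E × E × E' × A × A => ν₁ w.1 * ν₂ w.2.1 * ν₃ w.2.2.1 * ρ w.2.2.2)
      (fun w => w.2.2.2.1) a
      = ∑ a', ρ (a, a') := by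
  rw [masterM1 ν₁ ν₂ ν₃ ρ g hν₃ (fun t => t.1) a]
  refine (Fintype.sum_eq_single a fun x hx => ?_).trans ?_
  · exact Finset.sum_eq_zero fun _ _ => Finset.sum_eq_zero fun _ _ =>
      Finset.sum_eq_zero fun _ _ => by simp [hx]
  refine Finset.sum_congr rfl fun j _ => ?_
  trans (∑ k : Z, ρ (a, j) * (∑ e, if g a e = k then ν₁ e else 0))
  · refine Finset.sum_congr rfl fun k _ => ?_
    trans (∑ l : Z, (ρ (a, j) * (∑ e, if g a e = k then ν₁ e else 0))
        * (∑ e, if g j e = l then ν₂ e else 0))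
    · exact Finset.sum_congr rfl fun l _ => by rw [if_pos rfl] <;> ring
    rw [← Finset.mul_sum, sum_Gm (g j) ν₂, hν₂, mul_one]
  rw [← Finset.mul_sum, sum_Gm (g a) ν₁, hν₁, mul_one]

-- c7 : P(x', x)
include g in
lemma conc7 (hν₁ : ∑ e, ν₁ e = 1) (hν₂ : ∑ e, ν₂ e = 1) (hν₃ : ∑ e, ν₃ e = 1) (a a' : A) :
    pmfOf (fun w : E × E × E' × A × A => ν₁ w.1 * ν₂ w.2.1 * ν₃ w.2.2.1 * ρ w.2.2.2)
      (fun w => (w.2.2.2.2, w.2.2.2.1)) (a', a)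
      = ρ (a, a') := by
  rw [masterM1 ν₁ ν₂ ν₃ ρ g hν₃ (fun t => (t.2.1, t.1)) (a', a)]
  refine (Fintype.sum_eq_single a fun x hx => ?_).trans ?_
  · exact Finset.sum_eq_zero fun _ _ => Finset.sum_eq_zero fun _ _ =>
      Finset.sum_eq_zero fun _ _ => by simp [Prod.mk.injEq, hx]
  refine (Fintype.sum_eq_single a' fun x hx => ?_).trans ?_
  · exact Finset.sum_eq_zero fun _ _ => Finset.sum_eq_zero fun _ _ => by
      simp [Prod.mk.injEq, hx]
  trans (∑ k : Z, ρ (a, a') * (∑ e, if g a e = k then ν₁ e else 0))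
  · refine Finset.sum_congr rfl fun k _ => ?_
    trans (∑ l : Z, (ρ (a, a') * (∑ e, if g a e = k then ν₁ e else 0))
        * (∑ e, if g a' e = l then ν₂ e else 0))
    · exact Finset.sum_congr rfl fun l _ => by rw [if_pos rfl] <;> ring
    rw [← Finset.mul_sum, sum_Gm (g a') ν₂, hν₂, mul_one]
  rw [← Finset.mul_sum, sum_Gm (g a) ν₁, hν₁, mul_one]

-- c8 : P(z, x)
lemma conc8 (hν₂ : ∑ e, ν₂ e = 1) (hν₃ : ∑ e, ν₃ e = 1) (ζ : Z) (a : A) :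
    pmfOf (fun w : E × E × E' × A × A => ν₁ w.1 * ν₂ w.2.1 * ν₃ w.2.2.1 * ρ w.2.2.2)
      (fun w => (g w.2.2.2.1 w.1, w.2.2.2.1)) (ζ, a)
      = (∑ a', ρ (a, a')) * (∑ e, if g a e = ζ then ν₁ e else 0) := by
  rw [masterM1 ν₁ ν₂ ν₃ ρ g hν₃ (fun t => (t.2.2.1, t.1)) (ζ, a)]
  refine (Fintype.sum_eq_single a fun x hx => ?_).trans ?_
  · exact Finset.sum_eq_zero fun _ _ => Finset.sum_eq_zero fun _ _ =>
      Finset.sum_eq_zero fun _ _ => by simp [Prod.mk.injEq, hx]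
  refine Eq.trans (Finset.sum_congr rfl fun j _ => ?_) (Finset.sum_mul _ _ _).symm
  refine (Fintype.sum_eq_single ζ fun x hx => ?_).trans ?_
  · exact Finset.sum_eq_zero fun _ _ => by simp [Prod.mk.injEq, hx]
  refine Eq.trans (Finset.sum_congr rfl fun l _ => if_pos rfl) ?_
  rw [← Finset.mul_sum, sum_Gm (g j) ν₂, hν₂, mul_one]

-- c9 : P(y, z, x)
lemma conc9 (hν₂ : ∑ e, ν₂ e = 1) (b : B) (ζ : Z) (a : A) :
    pmfOf (fun w : E × E × E' × A × A => ν₁ w.1 * ν₂ w.2.1 * ν₃ w.2.2.1 * ρ w.2.2.2)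
      (fun w => (f w.2.2.2.2 w.2.2.1, g w.2.2.2.1 w.1, w.2.2.2.1)) (b, ζ, a)
      = (∑ a', ρ (a, a') * (∑ e, if f a' e = b then ν₃ e else 0))
          * (∑ e, if g a e = ζ then ν₁ e else 0) := by
  rw [masterM2 ν₁ ν₂ ν₃ ρ g f hν₂ (fun t => (t.2.2.2, t.2.2.1, t.1)) (b, ζ, a)]
  refine (Fintype.sum_eq_single a fun x hx => ?_).trans ?_
  · exact Finset.sum_eq_zero fun _ _ => Finset.sum_eq_zero fun _ _ =>
      Finset.sum_eq_zero fun _ _ => by simp [Prod.mk.injEq, hx]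
  trans (∑ j : A, (ρ (a, j) * (∑ e, if f j e = b then ν₃ e else 0))
      * (∑ e, if g a e = ζ then ν₁ e else 0))
  · refine Finset.sum_congr rfl fun j _ => ?_
    refine (Fintype.sum_eq_single ζ fun x hx => ?_).trans ?_
    · exact Finset.sum_eq_zero fun _ _ => by simp [Prod.mk.injEq, hx]
    refine (Fintype.sum_eq_single b fun x hx => by simp [Prod.mk.injEq, hx]).trans ?_
    rw [if_pos rfl] <;> ring
  exact (Finset.sum_mul _ _ _).symm

-- c10 : P(y, x)
include g in
lemma conc10 (hν₁ : ∑ e, ν₁ e = 1) (hν₂ : ∑ e, ν₂ e = 1) (b : B) (a : A) :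
    pmfOf (fun w : E × E × E' × A × A => ν₁ w.1 * ν₂ w.2.1 * ν₃ w.2.2.1 * ρ w.2.2.2)
      (fun w => (f w.2.2.2.2 w.2.2.1, w.2.2.2.1)) (b, a)
      = ∑ a', ρ (a, a') * (∑ e, if f a' e = b then ν₃ e else 0) := by
  rw [masterM2 ν₁ ν₂ ν₃ ρ g f hν₂ (fun t => (t.2.2.2, t.1)) (b, a)]
  refine (Fintype.sum_eq_single a fun x hx => ?_).trans ?_
  · exact Finset.sum_eq_zero fun _ _ => Finset.sum_eq_zero fun _ _ =>
      Finset.sum_eq_zero fun _ _ => by simp [Prod.mk.injEq, hx]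
  refine Finset.sum_congr rfl fun j _ => ?_
  trans (∑ k : Z, (ρ (a, j) * (∑ e, if f j e = b then ν₃ e else 0))
      * (∑ e, if g a e = k then ν₁ e else 0))
  · refine Finset.sum_congr rfl fun k _ => ?_
    refine (Fintype.sum_eq_single b fun x hx => by simp [Prod.mk.injEq, hx]).trans ?_
    rw [if_pos rfl] <;> ring
  rw [← Finset.mul_sum, sum_Gm (g a) ν₁, hν₁, mul_one]

-- c11 : P(x, ε₃, (x', z))
lemma conc11 (hν₂ : ∑ e, ν₂ e = 1) (a a' : A) (e₃ : E') (ζ : Z) :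
    pmfOf (fun w : E × E × E' × A × A => ν₁ w.1 * ν₂ w.2.1 * ν₃ w.2.2.1 * ρ w.2.2.2)
      (fun w => (w.2.2.2.1, w.2.2.1, w.2.2.2.2, g w.2.2.2.1 w.1)) (a, e₃, a', ζ)
      = ρ (a, a') * (∑ e, if g a e = ζ then ν₁ e else 0) * ν₃ e₃ := by
  rw [masterM3 ν₁ ν₂ ν₃ ρ g hν₂ (fun t => (t.1, t.2.2.2, t.2.1, t.2.2.1)) (a, e₃, a', ζ)]
  refine (Fintype.sum_eq_single a fun x hx => ?_).trans ?_
  · exact Finset.sum_eq_zero fun _ _ => Finset.sum_eq_zero fun _ _ =>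
      Finset.sum_eq_zero fun _ _ => by simp [Prod.mk.injEq, hx]
  refine (Fintype.sum_eq_single a' fun x hx => ?_).trans ?_
  · exact Finset.sum_eq_zero fun _ _ => Finset.sum_eq_zero fun _ _ => by
      simp [Prod.mk.injEq, hx]
  refine (Fintype.sum_eq_single ζ fun x hx => ?_).trans ?_
  · exact Finset.sum_eq_zero fun _ _ => by simp [Prod.mk.injEq, hx]
  refine (Fintype.sum_eq_single e₃ fun x hx => by simp [Prod.mk.injEq, hx]).trans ?_
  rw [if_pos rfl]

-- c13 : P(x, (x', z))
lemma conc13 (hν₂ : ∑ e, ν₂ e = 1) (a a' : A) (ζ : Z) :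
    pmfOf (fun w : E × E × E' × A × A => ν₁ w.1 * ν₂ w.2.1 * ν₃ w.2.2.1 * ρ w.2.2.2)
      (fun w => (w.2.2.2.1, w.2.2.2.2, g w.2.2.2.1 w.1)) (a, a', ζ)
      = ρ (a, a') * (∑ e, if g a e = ζ then ν₁ e else 0) * ∑ e, ν₃ e := by
  rw [masterM3 ν₁ ν₂ ν₃ ρ g hν₂ (fun t => (t.1, t.2.1, t.2.2.1)) (a, a', ζ)]
  refine (Fintype.sum_eq_single a fun x hx => ?_).trans ?_
  · exact Finset.sum_eq_zero fun _ _ => Finset.sum_eq_zero fun _ _ =>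
      Finset.sum_eq_zero fun _ _ => by simp [Prod.mk.injEq, hx]
  refine (Fintype.sum_eq_single a' fun x hx => ?_).trans ?_
  · exact Finset.sum_eq_zero fun _ _ => Finset.sum_eq_zero fun _ _ => by
      simp [Prod.mk.injEq, hx]
  refine (Fintype.sum_eq_single ζ fun x hx => ?_).trans ?_
  · exact Finset.sum_eq_zero fun _ _ => by simp [Prod.mk.injEq, hx]
  refine Eq.trans (Finset.sum_congr rfl fun l _ => if_pos rfl) ?_
  rw [← Finset.mul_sum]

-- c14 : P(ε₃, (x', z))
lemma conc14 (hν₂ : ∑ e, ν₂ e = 1) (e₃ : E') (a' : A) (ζ : Z) :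
    pmfOf (fun w : E × E × E' × A × A => ν₁ w.1 * ν₂ w.2.1 * ν₃ w.2.2.1 * ρ w.2.2.2)
      (fun w => (w.2.2.1, w.2.2.2.2, g w.2.2.2.1 w.1)) (e₃, a', ζ)
      = (∑ a, ρ (a, a') * (∑ e, if g a e = ζ then ν₁ e else 0)) * ν₃ e₃ := by
  rw [masterM3 ν₁ ν₂ ν₃ ρ g hν₂ (fun t => (t.2.2.2, t.2.1, t.2.2.1)) (e₃, a', ζ)]
  refine Eq.trans (Finset.sum_congr rfl fun i _ => ?_) (Finset.sum_mul _ _ _).symm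
  refine (Fintype.sum_eq_single a' fun x hx => ?_).trans ?_
  · exact Finset.sum_eq_zero fun _ _ => Finset.sum_eq_zero fun _ _ => by
      simp [Prod.mk.injEq, hx]
  refine (Fintype.sum_eq_single ζ fun x hx => ?_).trans ?_
  · exact Finset.sum_eq_zero fun _ _ => by simp [Prod.mk.injEq, hx]
  refine (Fintype.sum_eq_single e₃ fun x hx => by simp [Prod.mk.injEq, hx]).trans ?_
  rw [if_pos rfl]

-- c5 : P(x', z, x)
lemma conc5 (hν₂ : ∑ e, ν₂ e = 1) (hν₃ : ∑ e, ν₃ e = 1) (a a' : A) (ζ : Z) :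
    pmfOf (fun w : E × E × E' × A × A => ν₁ w.1 * ν₂ w.2.1 * ν₃ w.2.2.1 * ρ w.2.2.2)
      (fun w => (w.2.2.2.2, g w.2.2.2.1 w.1, w.2.2.2.1)) (a', ζ, a)
      = ρ (a, a') * (∑ e, if g a e = ζ then ν₁ e else 0) := by
  rw [masterM1 ν₁ ν₂ ν₃ ρ g hν₃ (fun t => (t.2.1, t.2.2.1, t.1)) (a', ζ, a)]
  refine (Fintype.sum_eq_single a fun i hi => ?_).trans ?_
  · exact Finset.sum_eq_zero fun _ _ => Finset.sum_eq_zero fun _ _ =>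
      Finset.sum_eq_zero fun _ _ => by simp [Prod.mk.injEq, hi]
  refine (Fintype.sum_eq_single a' fun i hi => ?_).trans ?_
  · exact Finset.sum_eq_zero fun _ _ => Finset.sum_eq_zero fun _ _ => by
      simp [Prod.mk.injEq, hi]
  refine (Fintype.sum_eq_single ζ fun i hi => ?_).trans ?_
  · exact Finset.sum_eq_zero fun _ _ => by simp [Prod.mk.injEq, hi]
  refine Eq.trans (Finset.sum_congr rfl fun ζ' _ => if_pos rfl) ?_
  rw [← Finset.mul_sum, sum_Gm (g a') ν₂, hν₂, mul_one]

end Concrete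
section Facts
variable {A E E' Z B : Type}
  [Fintype A] [DecidableEq A] [Fintype E] [DecidableEq E] [Fintype E'] [DecidableEq E']
  [Fintype Z] [DecidableEq Z] [Fintype B] [DecidableEq B]
variable (ν₁ ν₂ : E → ℝ) (ν₃ : E' → ℝ) (ρ : A × A → ℝ) (g : A → E → Z) (f : A → E' → B)

lemma prod_nonneg' (h1 : ∀ e, 0 ≤ ν₁ e) (h2 : ∀ e, 0 ≤ ν₂ e) (h3 : ∀ e, 0 ≤ ν₃ e)
    (hρ : ∀ p, 0 ≤ ρ p) :
    ∀ w : E × E × E' × A × A, 0 ≤ ν₁ w.1 * ν₂ w.2.1 * ν₃ w.2.2.1 * ρ w.2.2.2 := fun w =>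
  mul_nonneg (mul_nonneg (mul_nonneg (h1 _) (h2 _)) (h3 _)) (hρ _)

lemma factF1 (h1 : ∀ e, 0 ≤ ν₁ e) (h2 : ∀ e, 0 ≤ ν₂ e) (h3 : ∀ e, 0 ≤ ν₃ e)
    (hρ : ∀ p, 0 ≤ ρ p) (hν₁ : ∑ e, ν₁ e = 1) (hν₂ : ∑ e, ν₂ e = 1) (hν₃ : ∑ e, ν₃ e = 1) :
    cmi (fun w : E × E × E' × A × A => ν₁ w.1 * ν₂ w.2.1 * ν₃ w.2.2.1 * ρ w.2.2.2)
      (fun w => g w.2.2.2.1 w.1) (fun w => g w.2.2.2.2 w.2.1) (fun w => w.2.2.2.2) = 0 := by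
  refine cmi_eq_zero_of_indep _ (prod_nonneg' ν₁ ν₂ ν₃ ρ h1 h2 h3 hρ) ?_
  intro ζ ζ' a'
  show pmfOf _ (fun w : E × E × E' × A × A => (g w.2.2.2.1 w.1, g w.2.2.2.2 w.2.1, w.2.2.2.2)) (ζ, ζ', a')
      * pmfOf _ (fun w : E × E × E' × A × A => w.2.2.2.2) a'
    = pmfOf _ (fun w : E × E × E' × A × A => (g w.2.2.2.1 w.1, w.2.2.2.2)) (ζ, a')
      * pmfOf _ (fun w : E × E × E' × A × A => (g w.2.2.2.2 w.2.1, w.2.2.2.2)) (ζ', a')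
  rw [conc1 ν₁ ν₂ ν₃ ρ g hν₃ ζ ζ' a', conc2 ν₁ ν₂ ν₃ ρ g hν₁ hν₂ hν₃ a',
    conc3 ν₁ ν₂ ν₃ ρ g hν₂ hν₃ ζ a', conc4 ν₁ ν₂ ν₃ ρ g hν₁ hν₃ ζ' a']
  ring

lemma factF2 (h1 : ∀ e, 0 ≤ ν₁ e) (h2 : ∀ e, 0 ≤ ν₂ e) (h3 : ∀ e, 0 ≤ ν₃ e)
    (hρ : ∀ p, 0 ≤ ρ p) (hν₁ : ∑ e, ν₁ e = 1) (hν₂ : ∑ e, ν₂ e = 1) (hν₃ : ∑ e, ν₃ e = 1) :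
    cmi (fun w : E × E × E' × A × A => ν₁ w.1 * ν₂ w.2.1 * ν₃ w.2.2.1 * ρ w.2.2.2)
      (fun w => w.2.2.2.2) (fun w => g w.2.2.2.1 w.1) (fun w => w.2.2.2.1) = 0 := by
  refine cmi_eq_zero_of_indep _ (prod_nonneg' ν₁ ν₂ ν₃ ρ h1 h2 h3 hρ) ?_
  intro a' ζ a
  show pmfOf _ (fun w : E × E × E' × A × A => (w.2.2.2.2, g w.2.2.2.1 w.1, w.2.2.2.1)) (a', ζ, a)
      * pmfOf _ (fun w : E × E × E' × A × A => w.2.2.2.1) a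
    = pmfOf _ (fun w : E × E × E' × A × A => (w.2.2.2.2, w.2.2.2.1)) (a', a)
      * pmfOf _ (fun w : E × E × E' × A × A => (g w.2.2.2.1 w.1, w.2.2.2.1)) (ζ, a)
  rw [conc5 ν₁ ν₂ ν₃ ρ g hν₂ hν₃ a a' ζ, conc6 ν₁ ν₂ ν₃ ρ g hν₁ hν₂ hν₃ a,
    conc7 ν₁ ν₂ ν₃ ρ g hν₁ hν₂ hν₃ a a', conc8 ν₁ ν₂ ν₃ ρ g hν₂ hν₃ ζ a]
  ring

lemma factF3 (h1 : ∀ e, 0 ≤ ν₁ e) (h2 : ∀ e, 0 ≤ ν₂ e) (h3 : ∀ e, 0 ≤ ν₃ e)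
    (hρ : ∀ p, 0 ≤ ρ p) (hν₁ : ∑ e, ν₁ e = 1) (hν₂ : ∑ e, ν₂ e = 1) (hν₃ : ∑ e, ν₃ e = 1) :
    cmi (fun w : E × E × E' × A × A => ν₁ w.1 * ν₂ w.2.1 * ν₃ w.2.2.1 * ρ w.2.2.2)
      (fun w => f w.2.2.2.2 w.2.2.1) (fun w => g w.2.2.2.1 w.1) (fun w => w.2.2.2.1) = 0 := by
  refine cmi_eq_zero_of_indep _ (prod_nonneg' ν₁ ν₂ ν₃ ρ h1 h2 h3 hρ) ?_
  intro b ζ a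
  show pmfOf _ (fun w : E × E × E' × A × A => (f w.2.2.2.2 w.2.2.1, g w.2.2.2.1 w.1, w.2.2.2.1)) (b, ζ, a)
      * pmfOf _ (fun w : E × E × E' × A × A => w.2.2.2.1) a
    = pmfOf _ (fun w : E × E × E' × A × A => (f w.2.2.2.2 w.2.2.1, w.2.2.2.1)) (b, a)
      * pmfOf _ (fun w : E × E × E' × A × A => (g w.2.2.2.1 w.1, w.2.2.2.1)) (ζ, a)
  rw [conc9 ν₁ ν₂ ν₃ ρ g f hν₂ b ζ a, conc6 ν₁ ν₂ ν₃ ρ g hν₁ hν₂ hν₃ a,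
    conc10 ν₁ ν₂ ν₃ ρ g f hν₁ hν₂ b a, conc8 ν₁ ν₂ ν₃ ρ g hν₂ hν₃ ζ a]
  ring

lemma factF5 (h1 : ∀ e, 0 ≤ ν₁ e) (h2 : ∀ e, 0 ≤ ν₂ e) (h3 : ∀ e, 0 ≤ ν₃ e)
    (hρ : ∀ p, 0 ≤ ρ p) (hν₂ : ∑ e, ν₂ e = 1) (hν₃ : ∑ e, ν₃ e = 1) :
    cmi (fun w : E × E × E' × A × A => ν₁ w.1 * ν₂ w.2.1 * ν₃ w.2.2.1 * ρ w.2.2.2)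
      (fun w => w.2.2.2.1) (fun w => w.2.2.1)
      (fun w => (w.2.2.2.2, g w.2.2.2.1 w.1)) = 0 := by
  refine cmi_eq_zero_of_indep _ (prod_nonneg' ν₁ ν₂ ν₃ ρ h1 h2 h3 hρ) ?_
  rintro a e ⟨a', ζ⟩
  show pmfOf _ (fun w : E × E × E' × A × A => (w.2.2.2.1, w.2.2.1, w.2.2.2.2, g w.2.2.2.1 w.1)) (a, e, a', ζ)
      * pmfOf _ (fun w : E × E × E' × A × A => (w.2.2.2.2, g w.2.2.2.1 w.1)) (a', ζ)
    = pmfOf _ (fun w : E × E × E' × A × A => (w.2.2.2.1, w.2.2.2.2, g w.2.2.2.1 w.1)) (a, a', ζ)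
      * pmfOf _ (fun w : E × E × E' × A × A => (w.2.2.1, w.2.2.2.2, g w.2.2.2.1 w.1)) (e, a', ζ)
  rw [conc11 ν₁ ν₂ ν₃ ρ g hν₂ a a' e ζ, conc12 ν₁ ν₂ ν₃ ρ g hν₂ hν₃ ζ a',
    conc13 ν₁ ν₂ ν₃ ρ g hν₂ a a' ζ, conc14 ν₁ ν₂ ν₃ ρ g hν₂ e a' ζ, hν₃]
  ring

end Facts
/-- **Autoinformation preservation implies sufficiency**: if the representation
`z_t = g(x_t, ε₁)`, `z_{t+τ} = g(x_{t+τ}, ε₂)` preserves autoinformation at lag `τ`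
(`I(x_t; x_{t+τ}) = I(z_t; z_{t+τ})`, i.e. `AIG(z_t; τ) = 0`), then `z_t` is sufficient for
every noisy function `y_{t+τ} = f(x_{t+τ}, ε₃)` of the future state:
`I(x_t; y_{t+τ}) = I(z_t; y_{t+τ})`. All noise variables are mutually independent and
independent of the process `(x_t, x_{t+τ})`. -/
theorem sufficiency_of_autoinfo_preservation {Ω A E E' Z B : Type} [Fintype Ω]
    [Fintype A] [DecidableEq A] [Fintype E] [DecidableEq E] [Fintype E'] [DecidableEq E']
    [Fintype Z] [DecidableEq Z] [Fintype B] [DecidableEq B]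
    (μ : Ω → ℝ) (hμ : IsPMF μ)
    (x x' : Ω → A) (ε₁ ε₂ : Ω → E) (ε₃ : Ω → E')
    (g : A → E → Z) (f : A → E' → B)
    (hIndep : ∀ (e₁ e₂ : E) (e₃ : E') (a a' : A),
      pmfOf μ (fun ω => (ε₁ ω, ε₂ ω, ε₃ ω, x ω, x' ω)) (e₁, e₂, e₃, a, a')
        = pmfOf μ ε₁ e₁ * pmfOf μ ε₂ e₂ * pmfOf μ ε₃ e₃
          * pmfOf μ (fun ω => (x ω, x' ω)) (a, a'))
    (hAIG : mi μ x x' = mi μ (fun ω => g (x ω) (ε₁ ω)) (fun ω => g (x' ω) (ε₂ ω))) :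
    mi μ x (fun ω => f (x' ω) (ε₃ ω))
      = mi μ (fun ω => g (x ω) (ε₁ ω)) (fun ω => f (x' ω) (ε₃ ω)) := by
  classical
  have hT : IsPMF (fun w : E × E × E' × A × A =>
      pmfOf μ (fun ω => (ε₁ ω, ε₂ ω, ε₃ ω, x ω, x' ω)) w) :=
    isPMF_pmfOf μ hμ _
  have hprod : (fun w : E × E × E' × A × A =>
        pmfOf μ (fun ω => (ε₁ ω, ε₂ ω, ε₃ ω, x ω, x' ω)) w)
      = fun w : E × E × E' × A × A =>
          pmfOf μ ε₁ w.1 * pmfOf μ ε₂ w.2.1 * pmfOf μ ε₃ w.2.2.1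
            * pmfOf μ (fun ω => (x ω, x' ω)) w.2.2.2 := by
    funext w
    obtain ⟨e₁, e₂, e₃, a, a'⟩ := w
    exact hIndep e₁ e₂ e₃ a a'
  have h10 : ∀ e, 0 ≤ pmfOf μ ε₁ e := pmfOf_nonneg μ hμ.1 ε₁
  have h20 : ∀ e, 0 ≤ pmfOf μ ε₂ e := pmfOf_nonneg μ hμ.1 ε₂
  have h30 : ∀ e, 0 ≤ pmfOf μ ε₃ e := pmfOf_nonneg μ hμ.1 ε₃
  have hρ0 : ∀ p, 0 ≤ pmfOf μ (fun ω => (x ω, x' ω)) p := pmfOf_nonneg μ hμ.1 _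
  have h1s : ∑ e, pmfOf μ ε₁ e = 1 := sum_pmfOf μ hμ ε₁
  have h2s : ∑ e, pmfOf μ ε₂ e = 1 := sum_pmfOf μ hμ ε₂
  have h3s : ∑ e, pmfOf μ ε₃ e = 1 := sum_pmfOf μ hμ ε₃
  have hνpPMF : IsPMF (fun w : E × E × E' × A × A =>
      pmfOf μ ε₁ w.1 * pmfOf μ ε₂ w.2.1 * pmfOf μ ε₃ w.2.2.1
        * pmfOf μ (fun ω => (x ω, x' ω)) w.2.2.2) := hprod ▸ hT
  -- transfer lemmas
  have e1 : mi μ x (fun ω => f (x' ω) (ε₃ ω))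
      = mi (fun w : E × E × E' × A × A =>
            pmfOf μ ε₁ w.1 * pmfOf μ ε₂ w.2.1 * pmfOf μ ε₃ w.2.2.1
              * pmfOf μ (fun ω => (x ω, x' ω)) w.2.2.2)
          (fun w => w.2.2.2.1) (fun w => f w.2.2.2.2 w.2.2.1) := by
    rw [← hprod]
    exact mi_comp μ (fun ω => (ε₁ ω, ε₂ ω, ε₃ ω, x ω, x' ω))
      (fun w => w.2.2.2.1) (fun w => f w.2.2.2.2 w.2.2.1)
  have e2 : mi μ (fun ω => g (x ω) (ε₁ ω)) (fun ω => f (x' ω) (ε₃ ω))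
      = mi (fun w : E × E × E' × A × A =>
            pmfOf μ ε₁ w.1 * pmfOf μ ε₂ w.2.1 * pmfOf μ ε₃ w.2.2.1
              * pmfOf μ (fun ω => (x ω, x' ω)) w.2.2.2)
          (fun w => g w.2.2.2.1 w.1) (fun w => f w.2.2.2.2 w.2.2.1) := by
    rw [← hprod]
    exact mi_comp μ (fun ω => (ε₁ ω, ε₂ ω, ε₃ ω, x ω, x' ω))
      (fun w => g w.2.2.2.1 w.1) (fun w => f w.2.2.2.2 w.2.2.1)
  have e3 : mi μ x x'
      = mi (fun w : E × E × E' × A × A =>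
            pmfOf μ ε₁ w.1 * pmfOf μ ε₂ w.2.1 * pmfOf μ ε₃ w.2.2.1
              * pmfOf μ (fun ω => (x ω, x' ω)) w.2.2.2)
          (fun w => w.2.2.2.1) (fun w => w.2.2.2.2) := by
    rw [← hprod]
    exact mi_comp μ (fun ω => (ε₁ ω, ε₂ ω, ε₃ ω, x ω, x' ω))
      (fun w => w.2.2.2.1) (fun w => w.2.2.2.2)
  have e4 : mi μ (fun ω => g (x ω) (ε₁ ω)) (fun ω => g (x' ω) (ε₂ ω))
      = mi (fun w : E × E × E' × A × A =>
            pmfOf μ ε₁ w.1 * pmfOf μ ε₂ w.2.1 * pmfOf μ ε₃ w.2.2.1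
              * pmfOf μ (fun ω => (x ω, x' ω)) w.2.2.2)
          (fun w => g w.2.2.2.1 w.1) (fun w => g w.2.2.2.2 w.2.1) := by
    rw [← hprod]
    exact mi_comp μ (fun ω => (ε₁ ω, ε₂ ω, ε₃ ω, x ω, x' ω))
      (fun w => g w.2.2.2.1 w.1) (fun w => g w.2.2.2.2 w.2.1)
  rw [e1, e2]
  refine abstract_sufficiency _ hνpPMF
    (fun w => w.2.2.2.1) (fun w => w.2.2.2.2)
    (fun w => g w.2.2.2.1 w.1) (fun w => g w.2.2.2.2 w.2.1)
    (fun w => f w.2.2.2.2 w.2.2.1) (fun w => w.2.2.1) f (fun w => rfl)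
    ?_ ?_ ?_ ?_ ?_
  · exact factF1 (pmfOf μ ε₁) (pmfOf μ ε₂) (pmfOf μ ε₃)
      (pmfOf μ (fun ω => (x ω, x' ω))) g h10 h20 h30 hρ0 h1s h2s h3s
  · exact factF2 (pmfOf μ ε₁) (pmfOf μ ε₂) (pmfOf μ ε₃)
      (pmfOf μ (fun ω => (x ω, x' ω))) g h10 h20 h30 hρ0 h1s h2s h3s
  · exact factF3 (pmfOf μ ε₁) (pmfOf μ ε₂) (pmfOf μ ε₃)
      (pmfOf μ (fun ω => (x ω, x' ω))) g f h10 h20 h30 hρ0 h1s h2s h3s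
  · exact factF5 (pmfOf μ ε₁) (pmfOf μ ε₂) (pmfOf μ ε₃)
      (pmfOf μ (fun ω => (x ω, x' ω))) g h10 h20 h30 hρ0 h2s h3s
  · rw [← e3, ← e4]
    exact hAIG
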